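/- arXiv:2602.18982 — 2 statements merged into one kernel-verified Lean document; each statement's English description precedes it below -/
import Mathlib

section
/- Let R and S be row-stochastic matrices indexed by a finite set S, and let x ∈ S be such that the rows R_{x,·} and S_{x,·} coincide. For t ≥ 0 and λ > 0, define P = ∑_{n≥0} e^{-λt}(λt)ⁿ/n! · Rⁿ and P' = ∑_{n≥0} e^{-λt}(λt)ⁿ/n! · Sⁿ. Then the ℓ¹ distance between the x-th rows satisfies ‖P_{x,·} - P'_{x,·}‖₁ ≤ 2(1 - e^{-λt}(1+λt)) ≤ (λt)². -/
open scoped BigOperators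

theorem stoch_pow_nonneg {S : Type*} [Fintype S] [DecidableEq S] (R : Matrix S S ℝ)
    (hR0 : ∀ x y, 0 ≤ R x y) : ∀ n a b, 0 ≤ (R ^ n) a b := by
  intro n
  induction n with
  | zero => intro a b; simp [Matrix.one_apply]; positivity
  | succ n ih =>
    intro a b
    rw [pow_succ, Matrix.mul_apply]
    exact Finset.sum_nonneg fun k _ => mul_nonneg (ih a k) (hR0 k b)

theorem stoch_pow_rowsum {S : Type*} [Fintype S] [DecidableEq S] (R : Matrix S S ℝ)
    (hR1 : ∀ x, ∑ y, R x y = 1) : ∀ n a, ∑ b, (R ^ n) a b = 1 := by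
  intro n
  induction n with
  | zero => intro a; simp [Matrix.one_apply]
  | succ n ih =>
    intro a
    simp only [pow_succ, Matrix.mul_apply]
    rw [Finset.sum_comm]
    simp_rw [← Finset.mul_sum, hR1]
    simpa using ih a

theorem stoch_pow_le_one {S : Type*} [Fintype S] [DecidableEq S] (R : Matrix S S ℝ)
    (hR0 : ∀ x y, 0 ≤ R x y) (hR1 : ∀ x, ∑ y, R x y = 1) :
    ∀ n a b, (R ^ n) a b ≤ 1 := by
  intro n a b
  rw [← stoch_pow_rowsum R hR1 n a]
  exact Finset.single_le_sum (fun y _ => stoch_pow_nonneg R hR0 n a y) (Finset.mem_univ b)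

theorem exp_tsum_aux (s : ℝ) : ∑' n : ℕ, s ^ n / n.factorial = Real.exp s := by
  rw [Real.exp_eq_exp_ℝ, NormedSpace.exp_eq_tsum_div]

theorem tail_sq_aux (s : ℝ) (hs : 0 ≤ s) :
    2 * (1 - Real.exp (-s) * (1 + s)) ≤ s ^ 2 := by
  set u : ℕ → ℝ := fun n => s ^ n / n.factorial with hu_def
  have hu : Summable u := Real.summable_pow_div_factorial s
  have h1 : Summable (fun n : ℕ => u (n + 1)) := (summable_nat_add_iff 1).2 hu
  have h2 : Summable (fun n : ℕ => u (n + 2)) := (summable_nat_add_iff 2).2 hu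
  have hsplit : Real.exp s = u 0 + (u 1 + ∑' n : ℕ, u (n + 2)) := by
    rw [← exp_tsum_aux s]
    rw [Summable.tsum_eq_zero_add hu, Summable.tsum_eq_zero_add h1]
  have hterm : ∀ n : ℕ, u (n + 2) ≤ s ^ 2 / 2 * u n := by
    intro n
    have hfac : (2 * n.factorial : ℝ) ≤ ((n + 2).factorial : ℝ) := by
      have : 2 * n.factorial ≤ (n + 2).factorial := by
        rw [Nat.factorial_succ, Nat.factorial_succ, ← Nat.mul_assoc]
        exact Nat.mul_le_mul_right _ (by nlinarith)
      exact_mod_cast this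
    have hpos : (0 : ℝ) < 2 * n.factorial := by positivity
    calc u (n + 2) = s ^ (n + 2) / (n + 2).factorial := rfl
      _ ≤ s ^ (n + 2) / (2 * n.factorial) := by
          gcongr
      _ = s ^ 2 / 2 * u n := by
          simp only [hu_def]
          rw [pow_add]
          field_simp
  have hT : ∑' n : ℕ, u (n + 2) ≤ s ^ 2 / 2 * Real.exp s := by
    calc ∑' n : ℕ, u (n + 2) ≤ ∑' n : ℕ, s ^ 2 / 2 * u n :=
          Summable.tsum_le_tsum hterm h2 (hu.mul_left _)
      _ = s ^ 2 / 2 * ∑' n, u n := tsum_mul_left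
      _ = s ^ 2 / 2 * Real.exp s := by rw [exp_tsum_aux]
  have hprod : Real.exp (-s) * Real.exp s = 1 := by
    rw [← Real.exp_add]; simp
  have hpos : 0 < Real.exp (-s) := Real.exp_pos _
  have hu0 : u 0 = 1 := by simp [hu_def]
  have hu1 : u 1 = s := by simp [hu_def]
  rw [hu0, hu1] at hsplit
  nlinarith [mul_le_mul_of_nonneg_left hT hpos.le]

theorem matrix_tsum_apply {S : Type*} [Fintype S] (F : ℕ → Matrix S S ℝ)
    (h : ∀ a b, Summable fun n => F n a b) (a b : S) :
    (∑' n, F n) a b = ∑' n, F n a b := by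
  have h1 : Summable F := by
    apply Pi.summable.2
    intro a'
    exact Pi.summable.2 (h a')
  exact (congrFun (tsum_apply h1) b).trans (tsum_apply (Pi.summable.2 (h a)))

set_option maxHeartbeats 1000000 in
/-- If `R` and `S'` are row-stochastic matrices that agree on row `x`, then the `x`-rows of the
Poisson-weighted (uniformization) series `∑ₙ e^{-λt}(λt)ⁿ/n! · Rⁿ` and the corresponding series
for `S'` differ in ℓ¹ norm by at most `2(1 - e^{-λt}(1+λt)) ≤ (λt)²`. -/
theorem uniformization_row_error_bound {S : Type*} [Fintype S] [DecidableEq S]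
    (R S' : Matrix S S ℝ)
    (hR0 : ∀ x y, 0 ≤ R x y) (hR1 : ∀ x, ∑ y, R x y = 1)
    (hS0 : ∀ x y, 0 ≤ S' x y) (hS1 : ∀ x, ∑ y, S' x y = 1)
    (x : S) (hrow : ∀ y, R x y = S' x y)
    (t l : ℝ) (ht : 0 ≤ t) (hl : 0 < l)
    (P P' : Matrix S S ℝ)
    (hP : P = ∑' n : ℕ, (Real.exp (-(l * t)) * (l * t) ^ n / n.factorial) • R ^ n)
    (hP' : P' = ∑' n : ℕ, (Real.exp (-(l * t)) * (l * t) ^ n / n.factorial) • S' ^ n) :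
    (∑ y, |P x y - P' x y| ≤ 2 * (1 - Real.exp (-(l * t)) * (1 + l * t))) ∧
      2 * (1 - Real.exp (-(l * t)) * (1 + l * t)) ≤ (l * t) ^ 2 := by
  set s : ℝ := l * t with hs_def
  have hs : 0 ≤ s := mul_nonneg hl.le ht
  set c : ℕ → ℝ := fun n => Real.exp (-s) * s ^ n / n.factorial with hc_def
  have hc0 : ∀ n, 0 ≤ c n := fun n => by
    have := Real.exp_pos (-s)
    positivity
  have hc : Summable c := by
    have := (Real.summable_pow_div_factorial s).mul_left (Real.exp (-s))
    simpa [hc_def, mul_div_assoc] using this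
  -- entrywise summability for a stochastic matrix
  have hent : ∀ (M : Matrix S S ℝ), (∀ a b, 0 ≤ M a b) → (∀ a, ∑ b, M a b = 1) →
      ∀ a b, Summable fun n => c n * (M ^ n) a b := by
    intro M hM0 hM1 a b
    apply Summable.of_nonneg_of_le
      (fun n => mul_nonneg (hc0 n) (stoch_pow_nonneg M hM0 n a b))
      (fun n => ?_) hc
    calc c n * (M ^ n) a b ≤ c n * 1 :=
          mul_le_mul_of_nonneg_left (stoch_pow_le_one M hM0 hM1 n a b) (hc0 n)
      _ = c n := mul_one _
  have hRent := hent R hR0 hR1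
  have hSent := hent S' hS0 hS1
  -- entrywise formulas for P and P'
  have hPxy : ∀ a b, P a b = ∑' n, c n * (R ^ n) a b := by
    intro a b
    rw [hP, matrix_tsum_apply _ (fun a b => by simpa [Matrix.smul_apply, smul_eq_mul]
      using hRent a b)]
    simp [Matrix.smul_apply, smul_eq_mul]
    rfl
  have hP'xy : ∀ a b, P' a b = ∑' n, c n * (S' ^ n) a b := by
    intro a b
    rw [hP', matrix_tsum_apply _ (fun a b => by simpa [Matrix.smul_apply, smul_eq_mul]
      using hSent a b)]
    simp [Matrix.smul_apply, smul_eq_mul]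
    rfl
  -- difference of rows
  set d : ℕ → S → ℝ := fun n y => (R ^ n) x y - (S' ^ n) x y with hd_def
  have hdsum : ∀ y, Summable fun n => c n * d n y := by
    intro y
    simpa [hd_def, mul_sub] using (hRent x y).sub (hSent x y)
  have hdiff : ∀ y, P x y - P' x y = ∑' n, c n * d n y := by
    intro y
    rw [hPxy, hP'xy, ← Summable.tsum_sub (hRent x y) (hSent x y)]
    congr 1 with n
    simp [hd_def, mul_sub]
  have habs_le : ∀ n y, |d n y| ≤ (R ^ n) x y + (S' ^ n) x y := by
    intro n y
    rw [abs_sub_le_iff]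
    constructor
    · nlinarith [stoch_pow_nonneg S' hS0 n x y, stoch_pow_nonneg R hR0 n x y]
    · nlinarith [stoch_pow_nonneg S' hS0 n x y, stoch_pow_nonneg R hR0 n x y]
  have hA_le : ∀ n, ∑ y, |d n y| ≤ 2 := by
    intro n
    calc ∑ y, |d n y| ≤ ∑ y, ((R ^ n) x y + (S' ^ n) x y) :=
          Finset.sum_le_sum fun y _ => habs_le n y
      _ = 2 := by
          rw [Finset.sum_add_distrib, stoch_pow_rowsum R hR1, stoch_pow_rowsum S' hS1]
          norm_num
  have hA0 : ∀ y, d 0 y = 0 := by intro y; simp [hd_def]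
  have hA1 : ∀ y, d 1 y = 0 := by intro y; simp [hd_def, hrow y]
  have habs_sum : ∀ y, Summable fun n => |c n * d n y| := by
    intro y
    apply Summable.of_nonneg_of_le (fun n => abs_nonneg _) (fun n => ?_) (hc.mul_right 2)
    rw [abs_mul, abs_of_nonneg (hc0 n)]
    have h1 : |d n y| ≤ ∑ y', |d n y'| :=
      Finset.single_le_sum (fun y' _ => abs_nonneg (d n y')) (Finset.mem_univ y)
    exact mul_le_mul_of_nonneg_left (h1.trans (hA_le n)) (hc0 n)
  -- the tail quantity
  set G : ℕ → ℝ := fun n => c n * ∑ y, |d n y| with hG_def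
  have hG0 : ∀ n, 0 ≤ G n :=
    fun n => mul_nonneg (hc0 n) (Finset.sum_nonneg fun y _ => abs_nonneg _)
  have hGle : ∀ n, G n ≤ 2 * c n := by
    intro n
    rw [mul_comm 2 (c n)]
    exact mul_le_mul_of_nonneg_left (hA_le n) (hc0 n)
  have hGsum : Summable G :=
    Summable.of_nonneg_of_le hG0 hGle (hc.mul_left 2)
  have hmain : ∑ y, |P x y - P' x y| ≤ ∑' n, G n := by
    calc ∑ y, |P x y - P' x y| = ∑ y, |∑' n, c n * d n y| := by
          simp_rw [hdiff]
      _ ≤ ∑ y, ∑' n, |c n * d n y| := by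
          apply Finset.sum_le_sum
          intro y _
          simpa [Real.norm_eq_abs, abs_mul] using norm_tsum_le_tsum_norm
            (f := fun n => c n * d n y) (by simpa [Real.norm_eq_abs, abs_mul] using habs_sum y)
      _ = ∑' n, ∑ y, |c n * d n y| := (Summable.tsum_finsetSum fun y _ => habs_sum y).symm
      _ = ∑' n, G n := by
          congr 1 with n
          simp [hG_def, abs_mul, abs_of_nonneg (hc0 n), Finset.mul_sum]
  -- sum of the tail
  have hcsum : ∑' n, c n = 1 := by
    have : ∑' n, c n = Real.exp (-s) * ∑' n : ℕ, s ^ n / n.factorial := by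
      rw [← tsum_mul_left]
      congr 1 with n
      simp [hc_def, mul_div_assoc]
    rw [this, exp_tsum_aux, ← Real.exp_add]
    simp
  have hG1 : Summable (fun n : ℕ => G (n + 1)) := (summable_nat_add_iff 1).2 hGsum
  have hG2 : Summable (fun n : ℕ => G (n + 2)) := (summable_nat_add_iff 2).2 hGsum
  have hc1 : Summable (fun n : ℕ => c (n + 1)) := (summable_nat_add_iff 1).2 hc
  have hc2 : Summable (fun n : ℕ => c (n + 2)) := (summable_nat_add_iff 2).2 hc
  have hGtail : ∑' n, G n = ∑' n : ℕ, G (n + 2) := by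
    rw [Summable.tsum_eq_zero_add hGsum, Summable.tsum_eq_zero_add hG1]
    have e0 : G 0 = 0 := by simp [hG_def, hA0]
    have e1 : G 1 = 0 := by simp [hG_def, hA1]
    rw [e0, e1]
    simp
  have hctail : ∑' n : ℕ, c (n + 2) = 1 - c 0 - c 1 := by
    have := Summable.tsum_eq_zero_add hc
    rw [Summable.tsum_eq_zero_add hc1] at this
    rw [hcsum] at this
    linarith
  have hGbound : ∑' n, G n ≤ 2 * (1 - c 0 - c 1) := by
    rw [hGtail]
    calc ∑' n : ℕ, G (n + 2) ≤ ∑' n : ℕ, 2 * c (n + 2) :=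
          Summable.tsum_le_tsum (fun n => hGle (n + 2)) hG2 (hc2.mul_left 2)
      _ = 2 * ∑' n : ℕ, c (n + 2) := tsum_mul_left
      _ = 2 * (1 - c 0 - c 1) := by rw [hctail]
  have hc0v : c 0 = Real.exp (-s) := by simp [hc_def]
  have hc1v : c 1 = Real.exp (-s) * s := by simp [hc_def]
  constructor
  · calc ∑ y, |P x y - P' x y| ≤ ∑' n, G n := hmain
      _ ≤ 2 * (1 - c 0 - c 1) := hGbound
      _ = 2 * (1 - Real.exp (-s) * (1 + s)) := by rw [hc0v, hc1v]; ring
  · exact tail_sq_aux s hs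
end

section
/- Let s be a nonzero real number and N > 1 a real number. Define P_fix(s) = (1 - e^{-2s})/(1 - e^{-2Ns}), extended continuously by P_fix(0) = 1/N. Then P_fix is strictly monotonically increasing in s. -/
open Real Set

private lemma bern {N : ℝ} (hN : 1 < N) {t : ℝ} (ht : 0 < t) (ht1 : t ≠ 1) :
    1 + N * (t - 1) < t ^ N := by
  have h := one_add_mul_self_lt_rpow_one_add (s := t - 1) (by linarith) (sub_ne_zero.2 ht1) hN
  simpa using h

private lemma keyF {N : ℝ} (hN : 1 < N) {s : ℝ} (hs : s ≠ 0) :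
    1 + N * (Real.exp (-2 * s) - 1) < Real.exp (-2 * N * s) := by
  have h := bern hN (exp_pos (-2 * s)) (by
    simp [Real.exp_eq_one_iff]
    intro h; exact hs (by linarith))
  calc 1 + N * (Real.exp (-2 * s) - 1) < Real.exp (-2 * s) ^ N := h
    _ = Real.exp (-2 * N * s) := by rw [← Real.exp_mul]; ring_nf

private lemma den_ne {N : ℝ} (hN : 1 < N) {s : ℝ} (hs : s ≠ 0) :
    1 - Real.exp (-2 * N * s) ≠ 0 := by
  have : Real.exp (-2 * N * s) ≠ 1 := by
    simp [Real.exp_eq_one_iff]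
    exact ⟨by intro h; nlinarith, hs⟩
  intro h; exact this (by linarith)

private lemma hasDeriv {N : ℝ} (hN : 1 < N) {s : ℝ} (hs : s ≠ 0) :
    HasDerivAt (fun s : ℝ => (1 - Real.exp (-2 * s)) / (1 - Real.exp (-2 * N * s)))
      ((2 * Real.exp (-2 * s) * (1 - Real.exp (-2 * N * s)) -
        (1 - Real.exp (-2 * s)) * (2 * N * Real.exp (-2 * N * s))) /
        (1 - Real.exp (-2 * N * s)) ^ 2) s := by
  have h01 : HasDerivAt (fun s : ℝ => -2 * s) (-2) s := by
    simpa using (hasDerivAt_id s).const_mul (-2)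
  have h02 : HasDerivAt (fun s : ℝ => -2 * N * s) (-2 * N) s := by
    simpa using (hasDerivAt_id s).const_mul (-2 * N)
  have h1 : HasDerivAt (fun s : ℝ => 1 - Real.exp (-2 * s)) (2 * Real.exp (-2 * s)) s := by
    have := (h01.exp).const_sub 1
    rw [show 2 * Real.exp (-2 * s) = -(Real.exp (-2 * s) * -2) by ring]; exact this
  have h2 : HasDerivAt (fun s : ℝ => 1 - Real.exp (-2 * N * s))
      (2 * N * Real.exp (-2 * N * s)) s := by
    have := (h02.exp).const_sub 1
    rw [show 2 * N * Real.exp (-2 * N * s) = -(Real.exp (-2 * N * s) * (-2 * N)) by ring]; exact this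
  exact h1.div h2 (den_ne hN hs)

private lemma deriv_pos {N : ℝ} (hN : 1 < N) {s : ℝ} (hs : s ≠ 0) :
    0 < (2 * Real.exp (-2 * s) * (1 - Real.exp (-2 * N * s)) -
        (1 - Real.exp (-2 * s)) * (2 * N * Real.exp (-2 * N * s))) /
        (1 - Real.exp (-2 * N * s)) ^ 2 := by
  apply div_pos
  · set a := Real.exp (-2 * s) with ha
    set b := Real.exp (-2 * N * s) with hbb
    set T := Real.exp (2 * s) with hT
    set B := Real.exp (2 * N * s) with hB
    have hb : 1 + N * (T - 1) < B := by
      have := keyF hN (neg_ne_zero.2 hs)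
      have e1 : -2 * -s = 2 * s := by ring
      have e2 : -2 * N * -s = 2 * N * s := by ring
      rw [e1, e2] at this; exact this
    have ha1 : a * T = 1 := by rw [ha, hT, ← Real.exp_add]; norm_num
    have ha2 : b * B = 1 := by rw [hbb, hB, ← Real.exp_add]; norm_num
    have pa : 0 < a := Real.exp_pos _
    have pb : 0 < b := Real.exp_pos _
    have key2 : 2 * a * (1 - b) - (1 - a) * (2 * N * b)
        = 2 * (a * b) * (B - (1 + N * (T - 1))) := by
      linear_combination (2 * N * b) * ha1 - (2 * a) * ha2
    nlinarith [key2, mul_pos (mul_pos pa pb) (sub_pos.2 hb)]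
  · exact pow_two_pos_of_ne_zero (den_ne hN hs)

private lemma bound_pos {N : ℝ} (hN : 1 < N) {s : ℝ} (hs : 0 < s) :
    1 / N < (1 - Real.exp (-2 * s)) / (1 - Real.exp (-2 * N * s)) := by
  have hb1 : Real.exp (-2 * N * s) < 1 := by
    rw [Real.exp_lt_one_iff]; nlinarith
  have hkey := keyF hN hs.ne'
  rw [div_lt_div_iff₀ (by linarith) (by linarith)]
  nlinarith

private lemma bound_neg {N : ℝ} (hN : 1 < N) {s : ℝ} (hs : s < 0) :
    (1 - Real.exp (-2 * s)) / (1 - Real.exp (-2 * N * s)) < 1 / N := by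
  have ha1 : 1 < Real.exp (-2 * s) := by rw [Real.one_lt_exp_iff]; linarith
  have hb1 : 1 < Real.exp (-2 * N * s) := by rw [Real.one_lt_exp_iff]; nlinarith
  have hkey := keyF hN hs.ne
  have heq : (1 - Real.exp (-2 * s)) / (1 - Real.exp (-2 * N * s))
      = (Real.exp (-2 * s) - 1) / (Real.exp (-2 * N * s) - 1) := by
    rw [← neg_div_neg_eq]; ring_nf
  rw [heq, div_lt_div_iff₀ (by linarith) (by linarith)]
  nlinarith

/-- Kimura's fixation probability `P_fix(s) = (1 - e^{-2s})/(1 - e^{-2Ns})`, extended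
continuously by `P_fix(0) = 1/N`, is strictly increasing in the selective advantage `s`. -/
theorem fixation_probability_strictMono (N : ℝ) (hN : 1 < N) :
    StrictMono (fun s : ℝ =>
      if s = 0 then 1 / N
      else (1 - Real.exp (-2 * s)) / (1 - Real.exp (-2 * N * s))) := by
  set F : ℝ → ℝ := fun s => (1 - Real.exp (-2 * s)) / (1 - Real.exp (-2 * N * s)) with hF
  have contOn : ∀ {D : Set ℝ}, (∀ x ∈ D, x ≠ 0) → ContinuousOn F D := fun hD =>
    fun x hx => ((hasDeriv hN (hD x hx)).continuousAt).continuousWithinAt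
  have dpos : ∀ {x : ℝ}, x ≠ 0 → 0 < deriv F x := fun hx => by
    rw [(hasDeriv hN hx).deriv]; exact deriv_pos hN hx
  have mono_neg : StrictMonoOn F (Iio 0) :=
    strictMonoOn_of_deriv_pos (convex_Iio 0) (contOn fun x hx => ne_of_lt hx)
      (fun x hx => dpos (ne_of_lt (by simpa [interior_Iio] using hx)))
  have mono_pos : StrictMonoOn F (Ioi 0) :=
    strictMonoOn_of_deriv_pos (convex_Ioi 0) (contOn fun x hx => ne_of_gt hx)
      (fun x hx => dpos (ne_of_gt (by simpa [interior_Ioi] using hx)))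
  intro a b hab
  dsimp only
  rcases lt_trichotomy a 0 with ha | ha | ha
  · rw [if_neg ha.ne]
    rcases lt_trichotomy b 0 with hb | hb | hb
    · rw [if_neg hb.ne]; exact mono_neg ha hb hab
    · rw [if_pos hb]; exact bound_neg hN ha
    · rw [if_neg hb.ne']; exact (bound_neg hN ha).trans (bound_pos hN hb)
  · subst ha
    rw [if_pos rfl, if_neg hab.ne']
    exact bound_pos hN hab
  · rw [if_neg ha.ne', if_neg (by linarith : b ≠ 0)]
    exact mono_pos ha (by linarith : (0:ℝ) < b) hab
end
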